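/- arXiv:1109.2005 — 4 statements merged into one kernel-verified Lean document; each statement's English description precedes it below -/
import Mathlib

section
/- Let Y = (ζ,U,H,v,w,h) ∈ C¹([0,T],F) be a solution of the system Y_t = G(Y). Then the quantity I(Y) = U²q² + w² − qh (where q = 1 + v) is conserved: for every t ∈ [0,T] one has U(t)²q(t)² + w(t)² − q(t)h(t) = U(0)²q(0)² + w(0)² − q(0)h(0) almost everywhere in ξ ∈ ℝ. -/
open MeasureTheory Real Filter Set
open scoped ENNReal NNReal Topology

noncomputable section

/-- An element `Y = (ζ, U, H, v, w, h)` of the function space underlying `F`. -/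
structure El where
  zeta : ℝ → ℝ
  U : ℝ → ℝ
  H : ℝ → ℝ
  v : ℝ → ℝ
  w : ℝ → ℝ
  h : ℝ → ℝ

namespace El

instance : Add El :=
  ⟨fun Y Z => ⟨Y.zeta + Z.zeta, Y.U + Z.U, Y.H + Z.H, Y.v + Z.v, Y.w + Z.w, Y.h + Z.h⟩⟩

instance : Sub El :=
  ⟨fun Y Z => ⟨Y.zeta - Z.zeta, Y.U - Z.U, Y.H - Z.H, Y.v - Z.v, Y.w - Z.w, Y.h - Z.h⟩⟩

instance : SMul ℝ El :=
  ⟨fun c Y => ⟨c • Y.zeta, c • Y.U, c • Y.H, c • Y.v, c • Y.w, c • Y.h⟩⟩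

/-- `q = 1 + v`. -/
def q (Y : El) : ℝ → ℝ := fun ξ => 1 + Y.v ξ

/-- `y(ξ) = ζ(ξ) + ξ`. -/
def y (Y : El) : ℝ → ℝ := fun ξ => Y.zeta ξ + ξ

end El

/-- Real-valued `L^p` norm of a real function. -/
def nn (p : ℝ≥0∞) (f : ℝ → ℝ) : ℝ := (eLpNorm f p (volume : Measure ℝ)).toReal

/-- Membership in the Banach space
`F = L^∞ × (L^∞ ∩ L²) × L^∞ × L² × L² × L²`. -/
def memF (Y : El) : Prop :=
  Measurable Y.zeta ∧ Measurable Y.U ∧ Measurable Y.H ∧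
  Measurable Y.v ∧ Measurable Y.w ∧ Measurable Y.h ∧
  eLpNorm Y.zeta ⊤ volume < ⊤ ∧
  eLpNorm Y.U 2 volume < ⊤ ∧ eLpNorm Y.U ⊤ volume < ⊤ ∧
  eLpNorm Y.H ⊤ volume < ⊤ ∧
  eLpNorm Y.v 2 volume < ⊤ ∧ eLpNorm Y.w 2 volume < ⊤ ∧ eLpNorm Y.h 2 volume < ⊤

/-- The norm on `F`:
`‖Y‖_F = ‖ζ‖_∞ + ‖U‖_2 + ‖U‖_∞ + ‖H‖_∞ + ‖v‖_2 + ‖w‖_2 + ‖h‖_2`. -/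
def normF (Y : El) : ℝ :=
  nn ⊤ Y.zeta + nn 2 Y.U + nn ⊤ Y.U + nn ⊤ Y.H + nn 2 Y.v + nn 2 Y.w + nn 2 Y.h

/-- The integrand `((3-2γ)/2) U² q + (γ/2) h`. -/
def integrandPQ (γ : ℝ) (Y : El) (η : ℝ) : ℝ :=
  (3 - 2 * γ) / 2 * (Y.U η) ^ 2 * Y.q η + γ / 2 * Y.h η

/-- The map `P`. -/
def Pmap (γ : ℝ) (Y : El) : ℝ → ℝ := fun ξ =>
  (1 / 2) * ∫ η : ℝ,
    Real.exp (-(Real.sign (ξ - η)) * (Y.y ξ - Y.y η)) * integrandPQ γ Y η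

/-- The map `Q`. -/
def Qmap (γ : ℝ) (Y : El) : ℝ → ℝ := fun ξ =>
  -(1 / 2) * ∫ η : ℝ,
    Real.sign (ξ - η) * Real.exp (-(Real.sign (ξ - η)) * (Y.y ξ - Y.y η)) *
      integrandPQ γ Y η

/-- The vector field `G` of the system (3.1). -/
def Gmap (γ : ℝ) (Y : El) : El where
  zeta := fun ξ => γ * Y.U ξ
  U := fun ξ => -(Qmap γ Y ξ)
  H := fun ξ => (Y.U ξ) ^ 3 - 2 * Pmap γ Y ξ * Y.U ξ
  v := fun ξ => γ * Y.w ξ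
  w := fun ξ => γ / 2 * Y.h ξ + ((3 - 2 * γ) / 2 * (Y.U ξ) ^ 2 - Pmap γ Y ξ) * Y.q ξ
  h := fun ξ => -2 * Qmap γ Y ξ * Y.U ξ * Y.q ξ + (3 * (Y.U ξ) ^ 2 - 2 * Pmap γ Y ξ) * Y.w ξ

/-- `Ys : ℝ → El` is a `C¹([0,T], F)` solution of `Y_t = Gf(Y)`. -/
def IsSolutionOn (Gf : El → El) (Ys : ℝ → El) (T : ℝ) : Prop :=
  (∀ t ∈ Icc (0 : ℝ) T, memF (Ys t)) ∧
  (∀ t ∈ Icc (0 : ℝ) T, ∀ ξ : ℝ,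
      HasDerivWithinAt (fun s => (Ys s).zeta ξ) ((Gf (Ys t)).zeta ξ) (Icc 0 T) t ∧
      HasDerivWithinAt (fun s => (Ys s).U ξ) ((Gf (Ys t)).U ξ) (Icc 0 T) t ∧
      HasDerivWithinAt (fun s => (Ys s).H ξ) ((Gf (Ys t)).H ξ) (Icc 0 T) t ∧
      HasDerivWithinAt (fun s => (Ys s).v ξ) ((Gf (Ys t)).v ξ) (Icc 0 T) t ∧
      HasDerivWithinAt (fun s => (Ys s).w ξ) ((Gf (Ys t)).w ξ) (Icc 0 T) t ∧
      HasDerivWithinAt (fun s => (Ys s).h ξ) ((Gf (Ys t)).h ξ) (Icc 0 T) t) ∧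
  (∀ s ∈ Icc (0 : ℝ) T,
    Tendsto (fun t => normF (Ys t - Ys s)) (nhdsWithin s (Icc 0 T)) (nhds 0))

/-- Membership in the decay space `F^e`. -/
def memFe (Y : El) : Prop :=
  memF Y ∧
  eLpNorm Y.q ⊤ volume < ⊤ ∧ eLpNorm Y.w ⊤ volume < ⊤ ∧ eLpNorm Y.h ⊤ volume < ⊤ ∧
  eLpNorm (fun ξ => Real.exp (|ξ| / 2) * Y.U ξ) 2 volume < ⊤ ∧
  eLpNorm (fun ξ => Real.exp (|ξ| / 2) * Y.w ξ) 2 volume < ⊤ ∧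
  eLpNorm (fun ξ => Real.exp |ξ| * Y.h ξ) 1 volume < ⊤

/-- The norm on `F^e`. -/
def normFe (Y : El) : ℝ :=
  normF Y + nn ⊤ Y.q + nn ⊤ Y.w + nn ⊤ Y.h +
    nn 2 (fun ξ => Real.exp (|ξ| / 2) * Y.U ξ) +
    nn 2 (fun ξ => Real.exp (|ξ| / 2) * Y.w ξ) +
    nn 1 (fun ξ => Real.exp |ξ| * Y.h ξ)

/-- Membership in the decay space `F^α`. -/
def memFal (α : ℝ) (Y : El) : Prop :=
  memF Y ∧
  eLpNorm Y.q ⊤ volume < ⊤ ∧ eLpNorm Y.w ⊤ volume < ⊤ ∧ eLpNorm Y.h ⊤ volume < ⊤ ∧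
  eLpNorm (fun ξ => (1 + |ξ|) ^ (α / 2) * Y.U ξ) 2 volume < ⊤ ∧
  eLpNorm (fun ξ => (1 + |ξ|) ^ (α / 2) * Y.w ξ) 2 volume < ⊤ ∧
  eLpNorm (fun ξ => (1 + |ξ|) ^ α * Y.h ξ) 1 volume < ⊤

/-- The norm on `F^α`. -/
def normFal (α : ℝ) (Y : El) : ℝ :=
  normF Y + nn ⊤ Y.q + nn ⊤ Y.w + nn ⊤ Y.h +
    nn 2 (fun ξ => (1 + |ξ|) ^ (α / 2) * Y.U ξ) +
    nn 2 (fun ξ => (1 + |ξ|) ^ (α / 2) * Y.w ξ) +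
    nn 1 (fun ξ => (1 + |ξ|) ^ α * Y.h ξ)

/-- The set `𝒢`. -/
def memG (Y : El) : Prop :=
  memF Y ∧
  eLpNorm Y.q ⊤ volume < ⊤ ∧ eLpNorm Y.w ⊤ volume < ⊤ ∧ eLpNorm Y.h ⊤ volume < ⊤ ∧
  (∀ ξ : ℝ, HasDerivAt Y.y (Y.q ξ) ξ ∧ HasDerivAt Y.U (Y.w ξ) ξ ∧
    HasDerivAt Y.H (Y.h ξ) ξ) ∧
  (∀ᵐ ξ : ℝ ∂volume,
    Y.q ξ * Y.h ξ = (Y.U ξ) ^ 2 * (Y.q ξ) ^ 2 + (Y.w ξ) ^ 2) ∧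
  (∃ c : ℝ, 0 < c ∧ ∀ᵐ ξ : ℝ ∂volume, 0 ≤ Y.q ξ ∧ 0 ≤ Y.h ξ ∧ c ≤ Y.q ξ + Y.h ξ)

/-- The sampling operator `𝐏` on the grid `ξ_i = iΔξ`:
`𝐏(f)(ξ) = f(ξ_i)` for `ξ ∈ [ξ_i, ξ_{i+1})`. -/
def samp (Δ : ℝ) (f : ℝ → ℝ) : ℝ → ℝ := fun ξ => f (Δ * (⌊ξ / Δ⌋ : ℤ))

/-- The cut-off operator: restriction to `[-R, R)`. -/
def cutoff (R : ℝ) (f : ℝ → ℝ) : ℝ → ℝ := fun ξ =>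
  if -R ≤ ξ ∧ ξ < R then f ξ else 0

/-- `P_{Δξ}`. -/
def PmapD (γ Δ : ℝ) (Y : El) : ℝ → ℝ := samp Δ (Pmap γ Y)

/-- `Q_{Δξ}`. -/
def QmapD (γ Δ : ℝ) (Y : El) : ℝ → ℝ := samp Δ (Qmap γ Y)

/-- The semi-discrete vector field `G_{Δξ}`. -/
def GmapD (γ Δ : ℝ) (Y : El) : El where
  zeta := fun ξ => γ * Y.U ξ
  U := fun ξ => -(QmapD γ Δ Y ξ)
  H := fun ξ => (Y.U ξ) ^ 3 - 2 * PmapD γ Δ Y ξ * Y.U ξ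
  v := fun ξ => γ * Y.w ξ
  w := fun ξ => γ / 2 * Y.h ξ + ((3 - 2 * γ) / 2 * (Y.U ξ) ^ 2 - PmapD γ Δ Y ξ) * Y.q ξ
  h := fun ξ => -2 * QmapD γ Δ Y ξ * Y.U ξ * Y.q ξ +
    (3 * (Y.U ξ) ^ 2 - 2 * PmapD γ Δ Y ξ) * Y.w ξ

/-- `P_{Δξ,R}`. -/
def PmapDR (γ Δ R : ℝ) (Y : El) : ℝ → ℝ := cutoff R (samp Δ (Pmap γ Y))

/-- `Q_{Δξ,R}`. -/
def QmapDR (γ Δ R : ℝ) (Y : El) : ℝ → ℝ := cutoff R (samp Δ (Qmap γ Y))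

/-- The fully space-discrete vector field `G_{Δξ,R}`. -/
def GmapDR (γ Δ R : ℝ) (Y : El) : El where
  zeta := fun ξ => γ * Y.U ξ
  U := fun ξ => -(QmapDR γ Δ R Y ξ)
  H := fun ξ => (Y.U ξ) ^ 3 - 2 * PmapDR γ Δ R Y ξ * Y.U ξ
  v := fun ξ => γ * Y.w ξ
  w := fun ξ => γ / 2 * Y.h ξ + ((3 - 2 * γ) / 2 * (Y.U ξ) ^ 2 - PmapDR γ Δ R Y ξ) * Y.q ξ
  h := fun ξ => -2 * QmapDR γ Δ R Y ξ * Y.U ξ * Y.q ξ +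
    (3 * (Y.U ξ) ^ 2 - 2 * PmapDR γ Δ R Y ξ) * Y.w ξ

/-- `f` is constant on each grid cell `[ξ_i, ξ_{i+1})`. -/
def pieceConst (Δ : ℝ) (f : ℝ → ℝ) : Prop := ∀ ξ : ℝ, f ξ = f (Δ * (⌊ξ / Δ⌋ : ℤ))

/-- Membership in `F_{Δξ,R}`: piecewise-constant on the grid cells, with
`U, v, w, h` vanishing outside `[-R, R)` (so `q = 1` there) and `ζ, H`
constant on `(-∞,-R)` and on `[R,∞)`. -/
def memFgrid (Δ R : ℝ) (Y : El) : Prop :=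
  memF Y ∧
  pieceConst Δ Y.zeta ∧ pieceConst Δ Y.U ∧ pieceConst Δ Y.H ∧
  pieceConst Δ Y.v ∧ pieceConst Δ Y.w ∧ pieceConst Δ Y.h ∧
  (∀ ξ : ℝ, ξ < -R ∨ R ≤ ξ → Y.U ξ = 0 ∧ Y.v ξ = 0 ∧ Y.w ξ = 0 ∧ Y.h ξ = 0) ∧
  (∀ ξ η : ℝ, ξ < -R → η < -R → Y.zeta ξ = Y.zeta η ∧ Y.H ξ = Y.H η) ∧
  (∀ ξ η : ℝ, R ≤ ξ → R ≤ η → Y.zeta ξ = Y.zeta η ∧ Y.H ξ = Y.H η)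

/-- Bespoke notion of a continuously Fréchet differentiable map from `F` into a
normed target, phrased with an explicit derivative `DΦ`, the seminorm `nT` of
the target, the norm `normF` on the source and `ε`-`δ` limits. -/
def IsC1 {β : Type*} [Add β] [Sub β] [SMul ℝ β] (nT : β → ℝ)
    (Φ : El → β) (DΦ : El → El → β) : Prop :=
  (∀ Y Z₁ Z₂ : El, DΦ Y (Z₁ + Z₂) = DΦ Y Z₁ + DΦ Y Z₂) ∧
  (∀ (Y : El) (c : ℝ) (Z : El), DΦ Y (c • Z) = c • DΦ Y Z) ∧
  (∀ Y : El, memF Y → ∀ ε > (0 : ℝ), ∃ δ > (0 : ℝ), ∀ Z : El, memF Z → normF Z ≤ δ →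
      nT (Φ (Y + Z) - Φ Y - DΦ Y Z) ≤ ε * normF Z) ∧
  (∀ Y : El, memF Y → ∀ ε > (0 : ℝ), ∃ δ > (0 : ℝ), ∀ Y' : El, memF Y' →
      normF (Y' - Y) ≤ δ → ∀ Z : El, memF Z →
        nT (DΦ Y' Z - DΦ Y Z) ≤ ε * normF Z)

/-- The `H¹(ℝ)` norm (for the smooth functions `P(Y)`, `Q(Y)`). -/
def H1norm (f : ℝ → ℝ) : ℝ := nn 2 f + nn 2 (deriv f)

end
/-- the quantity `I(Y) = U²q² + w² − qh` is conserved along any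
solution of `Y_t = G(Y)`, almost everywhere in `ξ`. -/
theorem stmt3 (γ T : ℝ) (hT : 0 ≤ T) (Ys : ℝ → El)
    (hsol : IsSolutionOn (Gmap γ) Ys T) :
    ∀ t ∈ Icc (0 : ℝ) T, ∀ᵐ ξ : ℝ ∂volume,
      ((Ys t).U ξ) ^ 2 * ((Ys t).q ξ) ^ 2 + ((Ys t).w ξ) ^ 2 -
          (Ys t).q ξ * (Ys t).h ξ
        = ((Ys 0).U ξ) ^ 2 * ((Ys 0).q ξ) ^ 2 + ((Ys 0).w ξ) ^ 2 -
          (Ys 0).q ξ * (Ys 0).h ξ := by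
  intro t ht
  refine Filter.Eventually.of_forall fun ξ => ?_
  set f : ℝ → ℝ := fun s =>
    ((Ys s).U ξ) ^ 2 * ((Ys s).q ξ) ^ 2 + ((Ys s).w ξ) ^ 2 -
      (Ys s).q ξ * (Ys s).h ξ with hf
  suffices h : ∀ x ∈ Icc (0 : ℝ) T, f x = f 0 from h t ht
  have key : ∀ x ∈ Icc (0 : ℝ) T, HasDerivWithinAt f 0 (Icc (0 : ℝ) T) x := by
    intro x hx
    obtain ⟨hζ, hU, hH, hv, hw, hh⟩ := hsol.2.1 x hx ξ
    simp only [Gmap] at hU hv hw hh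
    have hq : HasDerivWithinAt (fun s => (Ys s).q ξ) (γ * (Ys x).w ξ)
        (Icc (0 : ℝ) T) x := by
      simpa [El.q] using hv.const_add (1 : ℝ)
    have hD := (((hU.pow 2).mul (hq.pow 2)).add (hw.pow 2)).sub (hq.mul hh)
    refine hD.congr_deriv ?_
    simp only [El.q, Pi.pow_apply]
    ring
  have hcont : ContinuousOn f (Icc (0 : ℝ) T) := fun x hx =>
    (key x hx).continuousWithinAt
  have hderiv : ∀ x ∈ Ico (0 : ℝ) T, HasDerivWithinAt f 0 (Ici x) x := by
    intro x hx
    refine (key x ⟨hx.1, hx.2.le⟩).mono_of_mem_nhdsWithin ?_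
    have : Ici x ∩ Iio T ∈ nhdsWithin x (Ici x) :=
      inter_mem_nhdsWithin _ (Iio_mem_nhds hx.2)
    refine Filter.mem_of_superset this fun y hy => ⟨le_trans hx.1 hy.1, hy.2.le⟩
  exact constant_of_has_deriv_right_zero hcont hderiv
end

section
/- Let Y₀ ∈ F satisfy: q₀, w₀, h₀ ∈ L∞(ℝ), q₀h₀ = U₀²q₀² + w₀² almost everywhere, and q₀ ≥ 0, h₀ ≥ 0, q₀ + h₀ ≥ c almost everywhere for some constant c > 0. Let Y ∈ C¹([0,T],F) solve Y_t = G(Y) with Y(0) = Y₀. Then for every t ∈ [0,T] one has q(t)h(t) = U(t)²q(t)² + w(t)² almost everywhere, q(t) ≥ 0 and h(t) ≥ 0 almost everywhere, and there exists a constant C, depending only on the norm of the initial data, such that q(t) + h(t) ≥ e^{−Ct}(q₀ + h₀) ≥ e^{−CT}c > 0 almost everywhere. -/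
open MeasureTheory Real Filter Set
open scoped ENNReal NNReal Topology

section Helpers

open MeasureTheory

lemma nn_nonneg (p : ℝ≥0∞) (f : ℝ → ℝ) : 0 ≤ nn p f := ENNReal.toReal_nonneg

lemma ae_abs_le_nn_top {f : ℝ → ℝ} (hf : eLpNorm f ⊤ volume < ⊤) :
    ∀ᵐ ξ : ℝ ∂volume, |f ξ| ≤ nn ⊤ f := by
  filter_upwards [enorm_ae_le_eLpNormEssSup f (volume : Measure ℝ)] with x hx
  have h2 : (‖f x‖₊ : ℝ≥0∞) ≤ eLpNorm f ⊤ volume := by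
    rw [eLpNorm_exponent_top]; exact hx
  have := ENNReal.toReal_mono hf.ne h2
  simpa [nn, Real.norm_eq_abs] using this

lemma nn_add_le {p : ℝ≥0∞} (hp : 1 ≤ p) {f g : ℝ → ℝ} (hf : Measurable f) (hg : Measurable g)
    (hfp : eLpNorm f p volume < ⊤) (hgp : eLpNorm g p volume < ⊤) :
    nn p (f + g) ≤ nn p f + nn p g := by
  have h := eLpNorm_add_le (μ := (volume : Measure ℝ)) hf.aestronglyMeasurable hg.aestronglyMeasurable hp
  have hfin : eLpNorm f p volume + eLpNorm g p volume ≠ ⊤ :=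
    (ENNReal.add_lt_top.2 ⟨hfp, hgp⟩).ne
  have := ENNReal.toReal_mono hfin h
  rwa [ENNReal.toReal_add hfp.ne hgp.ne] at this

lemma nn_sub_le' {p : ℝ≥0∞} (hp : 1 ≤ p) {f g : ℝ → ℝ} (hf : Measurable f) (hg : Measurable g)
    (hfp : eLpNorm f p volume < ⊤) (hgp : eLpNorm g p volume < ⊤) :
    nn p f ≤ nn p g + nn p (f - g) := by
  have h1 : f = g + (f - g) := by ext x; simp
  have h2 : eLpNorm (f - g) p volume < ⊤ :=
    lt_of_le_of_lt (eLpNorm_sub_le hf.aestronglyMeasurable hg.aestronglyMeasurable hp)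
      (ENNReal.add_lt_top.2 ⟨hfp, hgp⟩)
  calc nn p f = nn p (g + (f - g)) := by rw [← h1]
    _ ≤ _ := nn_add_le hp hg (hf.sub hg) hgp h2

lemma nn_neg (p : ℝ≥0∞) (f : ℝ → ℝ) : nn p (-f) = nn p f := by
  simp [nn, eLpNorm_neg]


lemma El_sub_def (A B : El) : A - B =
    ⟨A.zeta - B.zeta, A.U - B.U, A.H - B.H, A.v - B.v, A.w - B.w, A.h - B.h⟩ := rfl

lemma memF_sub {A B : El} (hA : memF A) (hB : memF B) : memF (A - B) := by
  obtain ⟨a1, a2, a3, a4, a5, a6, b1, b2, b3, b4, b5, b6, b7⟩ := hA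
  obtain ⟨c1, c2, c3, c4, c5, c6, d1, d2, d3, d4, d5, d6, d7⟩ := hB
  refine ⟨a1.sub c1, a2.sub c2, a3.sub c3, a4.sub c4, a5.sub c5, a6.sub c6, ?_, ?_, ?_, ?_, ?_, ?_, ?_⟩ <;>
  · refine lt_of_le_of_lt (eLpNorm_sub_le ?_ ?_ ?_) (ENNReal.add_lt_top.2 ⟨by assumption, by assumption⟩) <;>
    first
    | exact le_top
    | exact one_le_two
    | exact Measurable.aestronglyMeasurable (by assumption)

lemma normF_nonneg (A : El) : 0 ≤ normF A := by
  have := nn_nonneg ⊤ A.zeta; have := nn_nonneg 2 A.U; have := nn_nonneg ⊤ A.U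
  have := nn_nonneg ⊤ A.H; have := nn_nonneg 2 A.v; have := nn_nonneg 2 A.w
  have := nn_nonneg 2 A.h
  unfold normF; linarith

lemma normF_le_add {A B : El} (hA : memF A) (hB : memF B) :
    normF A ≤ normF B + normF (A - B) := by
  obtain ⟨a1, a2, a3, a4, a5, a6, b1, b2, b3, b4, b5, b6, b7⟩ := hA
  obtain ⟨c1, c2, c3, c4, c5, c6, d1, d2, d3, d4, d5, d6, d7⟩ := hB
  have h1 := nn_sub_le' (p := ⊤) le_top a1 c1 b1 d1
  have h2 := nn_sub_le' (p := 2) one_le_two a2 c2 b2 d2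
  have h3 := nn_sub_le' (p := ⊤) le_top a2 c2 b3 d3
  have h4 := nn_sub_le' (p := ⊤) le_top a3 c3 b4 d4
  have h5 := nn_sub_le' (p := 2) one_le_two a4 c4 b5 d5
  have h6 := nn_sub_le' (p := 2) one_le_two a5 c5 b6 d6
  have h7 := nn_sub_le' (p := 2) one_le_two a6 c6 b7 d7
  unfold normF
  rw [El_sub_def]
  dsimp only
  linarith

lemma normF_sub_comm (A B : El) : normF (A - B) = normF (B - A) := by
  have e : B - A = ⟨-(A.zeta - B.zeta), -(A.U - B.U), -(A.H - B.H), -(A.v - B.v),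
      -(A.w - B.w), -(A.h - B.h)⟩ := by
    show (⟨B.zeta - A.zeta, B.U - A.U, B.H - A.H, B.v - A.v, B.w - A.w, B.h - A.h⟩ : El) = _
    congr 1 <;> ext x <;> simp
  rw [e, El_sub_def]
  unfold normF
  dsimp only
  rw [nn_neg, nn_neg, nn_neg, nn_neg, nn_neg, nn_neg, nn_neg]

lemma abs_normF_sub {A B : El} (hA : memF A) (hB : memF B) :
    |normF A - normF B| ≤ normF (A - B) := by
  rw [abs_sub_le_iff]
  constructor
  · have := normF_le_add hA hB; linarith
  · have := normF_le_add hB hA; rw [normF_sub_comm B A] at this; linarith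


lemma exists_normF_bound {T : ℝ} {Ys : ℝ → El}
    (hmem : ∀ t ∈ Icc (0 : ℝ) T, memF (Ys t))
    (hcont : ∀ s ∈ Icc (0 : ℝ) T,
      Tendsto (fun t => normF (Ys t - Ys s)) (nhdsWithin s (Icc 0 T)) (nhds 0)) :
    ∃ M : ℝ, 0 ≤ M ∧ ∀ t ∈ Icc (0 : ℝ) T, normF (Ys t) ≤ M := by
  have hcon : ContinuousOn (fun t => normF (Ys t)) (Icc 0 T) := by
    intro s hs
    have key : Tendsto (fun t => normF (Ys t)) (nhdsWithin s (Icc 0 T)) (nhds (normF (Ys s))) := by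
      rw [tendsto_iff_dist_tendsto_zero]
      apply squeeze_zero' (Eventually.of_forall fun t => dist_nonneg)
      · filter_upwards [self_mem_nhdsWithin] with t ht
        have := abs_normF_sub (hmem t ht) (hmem s hs)
        simpa [Real.dist_eq] using this
      · exact hcont s hs
    exact key
  rcases (isCompact_Icc (a := (0:ℝ)) (b := T)).exists_bound_of_continuousOn hcon with ⟨C, hC⟩
  refine ⟨max C 0, le_max_right _ _, fun t ht => ?_⟩
  have := hC t ht
  rw [Real.norm_eq_abs] at this
  exact le_trans (le_abs_self _) (le_trans this (le_max_left _ _))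

lemma ae_forall_time_bound {T M : ℝ} (hT : 0 ≤ T) (f : ℝ → ℝ → ℝ)
    (hcont : ∀ ξ : ℝ, ContinuousOn (fun t => f t ξ) (Icc 0 T))
    (hae : ∀ t ∈ Icc (0 : ℝ) T, ∀ᵐ ξ : ℝ ∂volume, |f t ξ| ≤ M) :
    ∀ᵐ ξ : ℝ ∂volume, ∀ t ∈ Icc (0 : ℝ) T, |f t ξ| ≤ M := by
  set D : Set ℝ := insert 0 (insert T (Set.range ((↑) : ℚ → ℝ) ∩ Ioo 0 T)) with hD
  have hDcount : D.Countable :=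
    (((Set.countable_range _).mono Set.inter_subset_left).insert T).insert 0
  have hDsub : D ⊆ Icc 0 T := by
    intro x hx
    rcases hx with rfl | hx
    · exact ⟨le_refl _, hT⟩
    rcases hx with rfl | hx
    · exact ⟨hT, le_refl _⟩
    · exact Ioo_subset_Icc_self hx.2
  have hDdense : Icc (0 : ℝ) T ⊆ closure D := by
    rcases eq_or_lt_of_le hT with rfl | hT'
    · intro x hx
      have : x = 0 := le_antisymm hx.2 hx.1
      subst this
      exact subset_closure (mem_insert _ _)
    · have h1 : Ioo (0 : ℝ) T ⊆ closure (Set.range ((↑) : ℚ → ℝ) ∩ Ioo 0 T) := by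
        have : Dense (Set.range ((↑) : ℚ → ℝ)) := Rat.denseRange_cast
        intro x hx
        have h := this.open_subset_closure_inter (t := Ioo 0 T) isOpen_Ioo
        have hmem := h hx
        rw [Set.inter_comm] at hmem
        exact hmem
      have h2 : Icc (0:ℝ) T = closure (Ioo 0 T) := (closure_Ioo hT'.ne).symm
      intro x hx
      rw [h2] at hx
      have : closure (Ioo (0:ℝ) T) ⊆ closure (closure (Set.range ((↑) : ℚ → ℝ) ∩ Ioo 0 T)) :=
        closure_mono h1
      have hx2 := this hx
      rw [closure_closure] at hx2
      exact closure_mono (fun y hy => (mem_insert_iff.2 (Or.inr (mem_insert_iff.2 (Or.inr hy))))) hx2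
  have hball : ∀ᵐ ξ : ℝ ∂volume, ∀ t ∈ D, |f t ξ| ≤ M :=
    (ae_ball_iff hDcount).2 fun t ht => hae t (hDsub ht)
  filter_upwards [hball] with ξ hξ t ht
  have htc : t ∈ closure D := hDdense ht
  have hne : (nhdsWithin t D).NeBot := mem_closure_iff_nhdsWithin_neBot.1 htc
  have htend : Tendsto (fun s => |f s ξ|) (nhdsWithin t D) (nhds |f t ξ|) := by
    have := (hcont ξ t ht).tendsto
    exact (this.mono_left (nhdsWithin_mono _ hDsub)).abs
  refine le_of_tendsto htend ?_
  filter_upwards [self_mem_nhdsWithin] with s hs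
  exact hξ s hs


lemma memLp2 {f : ℝ → ℝ} (hm : Measurable f) (h2 : eLpNorm f 2 volume < ⊤) :
    MemLp f 2 (volume : Measure ℝ) := ⟨hm.aestronglyMeasurable, h2⟩

lemma integral_sq_eq {f : ℝ → ℝ} (hm : Measurable f) (h2 : eLpNorm f 2 volume < ⊤) :
    ∫ x : ℝ, f x ^ 2 = (nn 2 f) ^ 2 := by
  have hmem := memLp2 hm h2
  have key := hmem.eLpNorm_eq_integral_rpow_norm two_ne_zero ENNReal.ofNat_ne_top
  have hI : (0:ℝ) ≤ ∫ a, ‖f a‖ ^ (2:ℝ≥0∞).toReal := by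
    apply integral_nonneg; intro a; positivity
  have : nn 2 f = (∫ a, ‖f a‖ ^ (2:ℝ≥0∞).toReal) ^ ((2:ℝ≥0∞).toReal)⁻¹ := by
    rw [nn, key, ENNReal.toReal_ofReal (Real.rpow_nonneg hI _)]
  rw [this]
  have hR : (((∫ a, ‖f a‖ ^ (2:ℝ≥0∞).toReal) ^ ((2:ℝ≥0∞).toReal)⁻¹)) ^ 2
      = ∫ a, ‖f a‖ ^ (2:ℝ≥0∞).toReal := by
    rw [← Real.rpow_natCast (((∫ a, ‖f a‖ ^ (2:ℝ≥0∞).toReal) ^ ((2:ℝ≥0∞).toReal)⁻¹)) 2,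
      ← Real.rpow_mul hI]
    norm_num
  rw [hR]
  apply integral_congr_ae
  filter_upwards with a
  have : (2:ℝ≥0∞).toReal = ((2:ℕ):ℝ) := by simp
  rw [this, Real.rpow_natCast, Real.norm_eq_abs, sq_abs]

lemma integrable_sq_of {f : ℝ → ℝ} (hm : Measurable f) (h2 : eLpNorm f 2 volume < ⊤) :
    Integrable (fun x => f x ^ 2) (volume : Measure ℝ) :=
  (memLp2 hm h2).integrable_sq

lemma integrable_exp_neg_two_abs : Integrable (fun x : ℝ => Real.exp (-2 * |x|)) volume := by
  have hb : ∀ x : ℝ, ‖Real.exp (-2 * |x|)‖ ≤ ‖((1 + x ^ 2)⁻¹ : ℝ)‖ := by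
    intro x
    have h1 : (0:ℝ) < 1 + x ^ 2 := by positivity
    rw [Real.norm_eq_abs, Real.abs_exp, Real.norm_eq_abs, abs_inv, abs_of_pos h1]
    rw [show (-2 : ℝ) * |x| = -(2 * |x|) by ring, Real.exp_neg]
    apply inv_anti₀ h1
    have h2 : 1 + |x| ≤ Real.exp |x| := by
      have := Real.add_one_le_exp |x|; linarith
    have h3 : (1 + |x|) ^ 2 ≤ (Real.exp |x|) ^ 2 := by
      apply pow_le_pow_left₀ (by positivity) h2
    calc 1 + x ^ 2 ≤ (1 + |x|) ^ 2 := by nlinarith [abs_nonneg x, sq_abs x]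
      _ ≤ (Real.exp |x|) ^ 2 := h3
      _ = Real.exp (2 * |x|) := by rw [← Real.exp_nat_mul]; norm_num
  exact (integrable_inv_one_add_sq).mono
    ((Real.continuous_exp.comp (continuous_const.mul continuous_abs)).measurable.aestronglyMeasurable)
    (Eventually.of_forall hb)

lemma integrable_exp_neg_two_abs_sub (ξ : ℝ) :
    Integrable (fun η : ℝ => Real.exp (-2 * |ξ - η|)) volume := by
  have h := integrable_exp_neg_two_abs.comp_sub_right (g := ξ)
  apply h.congr
  filter_upwards with η
  rw [abs_sub_comm]

lemma integral_exp_neg_two_abs_sub (ξ : ℝ) :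
    ∫ η : ℝ, Real.exp (-2 * |ξ - η|) = ∫ x : ℝ, Real.exp (-2 * |x|) := by
  rw [← integral_sub_right_eq_self (fun x : ℝ => Real.exp (-2 * |x|)) ξ]
  apply integral_congr_ae
  filter_upwards with η
  rw [abs_sub_comm]

lemma abs_sign_le (x : ℝ) : |Real.sign x| ≤ 1 := by
  rcases lt_trichotomy x 0 with h | h | h
  · rw [Real.sign_of_neg h]; norm_num
  · rw [h, Real.sign_zero]; norm_num
  · rw [Real.sign_of_pos h]; norm_num

lemma real_sign_mul_self (x : ℝ) : Real.sign x * x = |x| := by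
  rcases lt_trichotomy x 0 with h | h | h
  · rw [Real.sign_of_neg h, abs_of_neg h]; ring
  · rw [h]; simp
  · rw [Real.sign_of_pos h, abs_of_pos h]; ring


set_option maxHeartbeats 1000000 in
lemma PQ_bound (γ M : ℝ) (hM : 0 ≤ M) :
    ∃ K : ℝ, 0 ≤ K ∧ ∀ Y : El, memF Y →
      nn ⊤ Y.zeta ≤ M → nn 2 Y.U ≤ M → nn ⊤ Y.U ≤ M → nn 2 Y.v ≤ M → nn 2 Y.h ≤ M →
      ∀ ξ : ℝ, |Pmap γ Y ξ| ≤ Real.exp |Y.zeta ξ| * K ∧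
        |Qmap γ Y ξ| ≤ Real.exp |Y.zeta ξ| * K := by
  set A := |(3 - 2*γ)/2| with hA
  set B := |γ/2| with hB
  set κ := ∫ x : ℝ, Real.exp (-2 * |x|) with hκdef
  have hκ : 0 ≤ κ := integral_nonneg fun x => (Real.exp_pos _).le
  have hA0 : 0 ≤ A := abs_nonneg _
  have hB0 : 0 ≤ B := abs_nonneg _
  set K := (1/2) * Real.exp M * (A*M^2 + A*M/2*(M^2+M^2) + B/2*(κ + M^2)) with hK
  have hK0 : 0 ≤ K := by
    apply mul_nonneg (mul_nonneg (by norm_num) (Real.exp_pos _).le)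
    have t1 : 0 ≤ A*M^2 := by positivity
    have t2 : 0 ≤ A*M/2*(M^2+M^2) := by positivity
    have t3 : 0 ≤ B/2*(κ + M^2) := by
      apply mul_nonneg (by positivity); nlinarith [sq_nonneg M]
    linarith
  refine ⟨K, hK0, ?_⟩
  intro Y hY h1 h2 h3 h4 h5 ξ
  obtain ⟨mz, mU, mH, mv, mw, mh, fz, fU2, fU, fH, fv, fw, fh⟩ := hY
  set E := Real.exp (|Y.zeta ξ| + M) with hE
  have hE0 : 0 < E := Real.exp_pos _
  set g : ℝ → ℝ := fun η => E * (A * Y.U η^2 + A*M/2 * (Y.U η^2 + Y.v η^2)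
      + B/2 * (Real.exp (-2*|ξ - η|) + Y.h η^2)) with hg
  have int1 : Integrable (fun η => Y.U η^2) volume := integrable_sq_of mU fU2
  have int2 : Integrable (fun η => Y.v η^2) volume := integrable_sq_of mv fv
  have int3 : Integrable (fun η => Y.h η^2) volume := integrable_sq_of mh fh
  have intk : Integrable (fun η : ℝ => Real.exp (-2*|ξ - η|)) volume :=
    integrable_exp_neg_two_abs_sub ξ
  have hgint : Integrable g volume := by
    apply Integrable.const_mul
    exact ((int1.const_mul A).add ((int1.add int2).const_mul (A*M/2))).add
      ((intk.add int3).const_mul (B/2))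
  -- pointwise bound for the P-integrand
  have hptwise : ∀ᵐ η : ℝ ∂volume,
      ‖Real.exp (-(Real.sign (ξ - η)) * (Y.y ξ - Y.y η)) * integrandPQ γ Y η‖ ≤ g η := by
    filter_upwards [ae_abs_le_nn_top fU, ae_abs_le_nn_top fz] with η hUb hzb
    have hUM : |Y.U η| ≤ M := le_trans hUb h3
    have hzM : |Y.zeta η| ≤ M := le_trans hzb h1
    set d := ξ - η with hd
    set ker := Real.exp (-(Real.sign d) * (Y.y ξ - Y.y η)) with hker
    have hker0 : 0 < ker := Real.exp_pos _
    have k1 : ker ≤ E * Real.exp (-|d|) := by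
      rw [hker, hE, ← Real.exp_add]
      apply Real.exp_le_exp.2
      have e1 : Y.y ξ - Y.y η = d + (Y.zeta ξ - Y.zeta η) := by
        simp only [El.y, hd]; ring
      have e2 := real_sign_mul_self d
      have e3 : |Real.sign d * (Y.zeta ξ - Y.zeta η)| ≤ |Y.zeta ξ - Y.zeta η| := by
        rw [abs_mul]
        exact mul_le_of_le_one_left (abs_nonneg _) (abs_sign_le d)
      have e4 : |Y.zeta ξ - Y.zeta η| ≤ |Y.zeta ξ| + |Y.zeta η| := abs_sub _ _
      have e5 := neg_abs_le (Real.sign d * (Y.zeta ξ - Y.zeta η))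
      rw [e1]
      have : -(Real.sign d) * (d + (Y.zeta ξ - Y.zeta η))
          = -(Real.sign d * d) - Real.sign d * (Y.zeta ξ - Y.zeta η) := by ring
      rw [this, e2]
      linarith
    have k2 : |integrandPQ γ Y η| ≤ A * Y.U η^2 * (1 + |Y.v η|) + B * |Y.h η| := by
      rw [integrandPQ]
      refine le_trans (abs_add_le _ _) ?_
      have e1 : |(3 - 2 * γ) / 2 * Y.U η ^ 2 * Y.q η| = A * Y.U η^2 * |Y.q η| := by
        rw [abs_mul, abs_mul, ← hA, abs_of_nonneg (sq_nonneg _)]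
      have e2 : |Y.q η| ≤ 1 + |Y.v η| := by
        rw [El.q]
        refine le_trans (abs_add_le _ _) ?_
        simp
      have e3 : |γ / 2 * Y.h η| = B * |Y.h η| := by rw [abs_mul, ← hB]
      rw [e1, e3]
      have : A * Y.U η^2 * |Y.q η| ≤ A * Y.U η^2 * (1 + |Y.v η|) :=
        mul_le_mul_of_nonneg_left e2 (by positivity)
      linarith
    have k3 : Y.U η^2 * |Y.v η| ≤ M * (Y.U η^2 + Y.v η^2)/2 := by
      nlinarith [sq_abs (Y.U η), sq_abs (Y.v η), abs_nonneg (Y.U η), abs_nonneg (Y.v η),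
        sq_nonneg (|Y.U η| - |Y.v η|), sq_nonneg (Y.U η), sq_nonneg (Y.v η)]
    have hexple : Real.exp (-|d|) ≤ 1 := Real.exp_le_one_iff.2 (by simp [abs_nonneg])
    have hexp0 : 0 < Real.exp (-|d|) := Real.exp_pos _
    have hexpsq : Real.exp (-|d|) * Real.exp (-|d|) = Real.exp (-2*|d|) := by
      rw [← Real.exp_add]; ring_nf
    rw [norm_mul, Real.norm_eq_abs, Real.norm_eq_abs, abs_of_pos hker0]
    calc ker * |integrandPQ γ Y η|
        ≤ (E * Real.exp (-|d|)) * (A * Y.U η^2 * (1 + |Y.v η|) + B * |Y.h η|) := by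
          apply mul_le_mul k1 k2 (abs_nonneg _) (by positivity)
      _ ≤ g η := by
          rw [hg]
          dsimp only
          rw [← hd]
          have t1 : Real.exp (-|d|) * (A * Y.U η^2) ≤ A * Y.U η^2 :=
            mul_le_of_le_one_left (by positivity) hexple
          have t2 : Real.exp (-|d|) * (A * Y.U η^2 * |Y.v η|) ≤ A*M/2 * (Y.U η^2 + Y.v η^2) := by
            have s1 : Real.exp (-|d|) * (A * Y.U η^2 * |Y.v η|) ≤ A * Y.U η^2 * |Y.v η| :=
              mul_le_of_le_one_left (by positivity) hexple
            have s2 : A * Y.U η^2 * |Y.v η| ≤ A * (M * (Y.U η^2 + Y.v η^2)/2) := by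
              rw [mul_assoc]
              exact mul_le_mul_of_nonneg_left k3 hA0
            have s3 : A * (M * (Y.U η^2 + Y.v η^2)/2) = A*M/2 * (Y.U η^2 + Y.v η^2) := by ring
            linarith
          have t3 : Real.exp (-|d|) * (B * |Y.h η|) ≤ B/2 * (Real.exp (-2*|d|) + Y.h η^2) := by
            have hsq : 2 * (Real.exp (-|d|) * |Y.h η|) ≤ Real.exp (-2*|d|) + Y.h η^2 := by
              nlinarith [sq_nonneg (Real.exp (-|d|) - |Y.h η|), sq_abs (Y.h η)]
            have s1 : Real.exp (-|d|) * (B * |Y.h η|) = B * (Real.exp (-|d|) * |Y.h η|) := by ring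
            have s2 : B * (Real.exp (-|d|) * |Y.h η|) ≤ B * ((Real.exp (-2*|d|) + Y.h η^2)/2) :=
              mul_le_mul_of_nonneg_left (by linarith) hB0
            have s3 : B * ((Real.exp (-2*|d|) + Y.h η^2)/2) = B/2 * (Real.exp (-2*|d|) + Y.h η^2) := by ring
            linarith
          have expand : (E * Real.exp (-|d|)) * (A * Y.U η^2 * (1 + |Y.v η|) + B * |Y.h η|)
              = E * (Real.exp (-|d|) * (A * Y.U η^2)
                + Real.exp (-|d|) * (A * Y.U η^2 * |Y.v η|)
                + Real.exp (-|d|) * (B * |Y.h η|)) := by ring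
          rw [expand]
          apply mul_le_mul_of_nonneg_left _ hE0.le
          linarith
  -- value of the integral of g
  have hIU : ∫ η, Y.U η^2 ≤ M^2 := by
    rw [integral_sq_eq mU fU2]
    exact pow_le_pow_left₀ (nn_nonneg _ _) h2 2
  have hIv : ∫ η, Y.v η^2 ≤ M^2 := by
    rw [integral_sq_eq mv fv]
    exact pow_le_pow_left₀ (nn_nonneg _ _) h4 2
  have hIh : ∫ η, Y.h η^2 ≤ M^2 := by
    rw [integral_sq_eq mh fh]
    exact pow_le_pow_left₀ (nn_nonneg _ _) h5 2
  have hIU0 : 0 ≤ ∫ η, Y.U η^2 := integral_nonneg fun η => sq_nonneg _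
  have hIv0 : 0 ≤ ∫ η, Y.v η^2 := integral_nonneg fun η => sq_nonneg _
  have hIh0 : 0 ≤ ∫ η, Y.h η^2 := integral_nonneg fun η => sq_nonneg _
  have hgval : ∫ η, g η ≤ E * (A*M^2 + A*M/2*(M^2+M^2) + B/2*(κ + M^2)) := by
    rw [hg]
    simp only []
    rw [integral_const_mul]
    apply mul_le_mul_of_nonneg_left _ hE0.le
    have k1 := integral_add (μ := volume) (int1.const_mul A) ((int1.add int2).const_mul (A*M/2))
    have k2 := integral_add (μ := volume)
      ((int1.const_mul A).add ((int1.add int2).const_mul (A*M/2)))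
      ((intk.add int3).const_mul (B/2))
    have k3 := integral_add (μ := volume) int1 int2
    have k4 := integral_add (μ := volume) intk int3
    simp only [Pi.add_apply, integral_const_mul] at k1 k2 k3 k4 ⊢
    rw [k2, k1, k3, k4, integral_exp_neg_two_abs_sub, ← hκdef]
    have b1 : A * ∫ η, Y.U η^2 ≤ A * M^2 := mul_le_mul_of_nonneg_left hIU hA0
    have b2 : A*M/2 * ((∫ η, Y.U η^2) + ∫ η, Y.v η^2) ≤ A*M/2*(M^2+M^2) := by
      apply mul_le_mul_of_nonneg_left _ (by positivity)
      linarith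
    have b3 : B/2 * (κ + ∫ η, Y.h η^2) ≤ B/2*(κ + M^2) := by
      apply mul_le_mul_of_nonneg_left _ (by positivity)
      linarith
    linarith
  have hgnorm : ∀ F : ℝ → ℝ, (∀ᵐ η : ℝ ∂volume, ‖F η‖ ≤ g η) →
      |∫ η, F η| ≤ E * (A*M^2 + A*M/2*(M^2+M^2) + B/2*(κ + M^2)) := by
    intro F hF
    calc |∫ η, F η| = ‖∫ η, F η‖ := (Real.norm_eq_abs _).symm
      _ ≤ ∫ η, ‖F η‖ := norm_integral_le_integral_norm F
      _ ≤ ∫ η, g η := by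
          apply integral_mono_of_nonneg (Eventually.of_forall fun η => norm_nonneg _) hgint hF
      _ ≤ _ := hgval
  have hEK : (1/2) * (E * (A*M^2 + A*M/2*(M^2+M^2) + B/2*(κ + M^2)))
      = Real.exp |Y.zeta ξ| * K := by
    rw [hK, hE, Real.exp_add]; ring
  constructor
  · rw [Pmap, abs_mul, abs_of_pos (by norm_num : (0:ℝ) < 1/2)]
    rw [← hEK]
    apply mul_le_mul_of_nonneg_left _ (by norm_num : (0:ℝ) ≤ 1/2)
    exact hgnorm _ hptwise
  · rw [Qmap]
    rw [abs_mul, abs_neg, abs_of_pos (by norm_num : (0:ℝ) < 1/2)]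
    rw [← hEK]
    apply mul_le_mul_of_nonneg_left _ (by norm_num : (0:ℝ) ≤ 1/2)
    apply hgnorm
    filter_upwards [hptwise] with η hη
    have : ‖Real.sign (ξ - η) * Real.exp (-(Real.sign (ξ - η)) * (Y.y ξ - Y.y η)) *
        integrandPQ γ Y η‖ ≤ ‖Real.exp (-(Real.sign (ξ - η)) * (Y.y ξ - Y.y η)) *
        integrandPQ γ Y η‖ := by
      rw [mul_assoc, norm_mul, Real.norm_eq_abs (Real.sign _)]
      exact mul_le_of_le_one_left (norm_nonneg _) (abs_sign_le _)
    exact le_trans this hη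


lemma pos_of_sum_prod {q h : ℝ} (hk : 0 ≤ q * h) (hs : 0 ≤ q + h) : 0 ≤ q ∧ 0 ≤ h := by
  constructor <;> nlinarith

lemma gron_step (γ C U q w h P Q : ℝ) (hk : q*h = U^2*q^2 + w^2) (hs : 0 ≤ q + h)
    (hb : |γ| + 3*U^2 + 2*|P| + 2*|Q| ≤ 2*C) :
    0 ≤ (γ + 3*U^2 - 2*P)*w - 2*Q*U*q + C*(q+h) := by
  have hqh : 0 ≤ q*h := by rw [hk]; positivity
  obtain ⟨hq, hh⟩ := pos_of_sum_prod hqh hs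
  have hw : |w| ≤ (q+h)/2 := by
    nlinarith [sq_abs w, abs_nonneg w, sq_nonneg (q - h)]
  have hUq : |U*q| ≤ (q+h)/2 := by
    nlinarith [sq_abs (U*q), abs_nonneg (U*q), sq_nonneg (q - h), sq_nonneg w]
  have e1 : |(γ + 3*U^2 - 2*P)*w| ≤ (|γ| + 3*U^2 + 2*|P|) * ((q+h)/2) := by
    rw [abs_mul]
    apply mul_le_mul _ hw (abs_nonneg _) (by positivity)
    calc |γ + 3*U^2 - 2*P| ≤ |γ + 3*U^2| + |2*P| := abs_sub _ _
      _ ≤ |γ| + |3*U^2| + |2*P| := by linarith [abs_add_le γ (3*U^2)]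
      _ = |γ| + 3*U^2 + 2*|P| := by
          rw [abs_mul, abs_mul, abs_of_nonneg (sq_nonneg U)]
          norm_num
  have e2 : |2*Q*U*q| ≤ 2 * |Q| * ((q+h)/2) := by
    have e : |2*Q*U*q| = 2 * |Q| * |U * q| := by
      rw [show (2:ℝ)*Q*U*q = (2*Q)*(U*q) by ring, abs_mul, abs_mul]
      norm_num
    rw [e]
    exact mul_le_mul_of_nonneg_left hUq (by positivity)
  have e3 : (|γ| + 3*U^2 + 2*|P|) * ((q+h)/2) + 2 * |Q| * ((q+h)/2) ≤ 2*C * ((q+h)/2) := by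
    have e : (|γ| + 3*U^2 + 2*|P|) * ((q+h)/2) + 2 * |Q| * ((q+h)/2)
        = (|γ| + 3*U^2 + 2*|P| + 2*|Q|) * ((q+h)/2) := by ring
    rw [e]
    exact mul_le_mul_of_nonneg_right hb (by linarith)
  have e4 : 2*C * ((q+h)/2) = C*(q+h) := by ring
  have n1 := neg_abs_le ((γ + 3*U^2 - 2*P)*w)
  have n3 := le_abs_self (2*Q*U*q)
  linarith [e1, e2, e3, e4, n1, n3]

lemma ode_key (T γ C : ℝ) (hT : 0 ≤ T) (U v w h P Q : ℝ → ℝ)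
    (hU : ∀ t ∈ Icc (0:ℝ) T, HasDerivWithinAt U (-(Q t)) (Icc 0 T) t)
    (hv : ∀ t ∈ Icc (0:ℝ) T, HasDerivWithinAt v (γ * w t) (Icc 0 T) t)
    (hw : ∀ t ∈ Icc (0:ℝ) T, HasDerivWithinAt w
      (γ/2 * h t + ((3 - 2*γ)/2 * (U t)^2 - P t) * (1 + v t)) (Icc 0 T) t)
    (hh : ∀ t ∈ Icc (0:ℝ) T, HasDerivWithinAt h
      (-2 * Q t * U t * (1 + v t) + (3*(U t)^2 - 2*P t) * w t) (Icc 0 T) t)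
    (hC : ∀ t ∈ Icc (0:ℝ) T, |γ| + 3*(U t)^2 + 2*|P t| + 2*|Q t| ≤ 2*C)
    (hid0 : (1 + v 0) * h 0 = (U 0)^2 * (1 + v 0)^2 + (w 0)^2)
    (hpos0 : 0 < 1 + v 0 + h 0) :
    ∀ t ∈ Icc (0:ℝ) T,
      (1 + v t) * h t = (U t)^2 * (1 + v t)^2 + (w t)^2 ∧
      0 ≤ 1 + v t ∧ 0 ≤ h t ∧
      Real.exp (-C*t) * (1 + v 0 + h 0) ≤ 1 + v t + h t := by
  have hmem0 : (0:ℝ) ∈ Icc (0:ℝ) T := ⟨le_refl _, hT⟩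
  have hC0 : 0 ≤ C := by
    have := hC 0 hmem0
    nlinarith [abs_nonneg γ, abs_nonneg (P 0), abs_nonneg (Q 0), sq_nonneg (U 0)]
  have cU : ContinuousOn U (Icc 0 T) := fun t ht => (hU t ht).continuousWithinAt
  have cv : ContinuousOn v (Icc 0 T) := fun t ht => (hv t ht).continuousWithinAt
  have cw : ContinuousOn w (Icc 0 T) := fun t ht => (hw t ht).continuousWithinAt
  have ch : ContinuousOn h (Icc 0 T) := fun t ht => (hh t ht).continuousWithinAt
  set k : ℝ → ℝ := fun s => (1 + v s) * h s - (U s)^2*(1 + v s)^2 - (w s)^2 with hkdef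
  have ck : ContinuousOn k (Icc 0 T) :=
    (((continuousOn_const.add cv).mul ch).sub
      ((cU.pow 2).mul ((continuousOn_const.add cv).pow 2))).sub (cw.pow 2)
  have dk : ∀ t ∈ Icc (0:ℝ) T, HasDerivWithinAt k 0 (Icc 0 T) t := by
    intro t ht
    have dq : HasDerivWithinAt (fun s => 1 + v s) (γ * w t) (Icc 0 T) t :=
      (hv t ht).const_add 1
    have d1 := dq.mul (hh t ht)
    have d2 := ((hU t ht).pow 2).mul (dq.pow 2)
    have d3 := (hw t ht).pow 2
    have dtot := (d1.sub d2).sub d3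
    refine dtot.congr_deriv ?_
    simp only [Pi.pow_apply]
    norm_num
    ring
  have hnhds : ∀ x ∈ Ico (0:ℝ) T, Icc (0:ℝ) T ∈ 𝓝[Ici x] x := by
    intro x hx
    apply mem_nhdsWithin.2
    refine ⟨Iio T, isOpen_Iio, hx.2, ?_⟩
    rintro y ⟨hy1, hy2⟩
    exact ⟨le_trans hx.1 hy2, le_of_lt hy1⟩
  have hconst : ∀ t ∈ Icc (0:ℝ) T, k t = k 0 :=
    constant_of_has_deriv_right_zero ck fun x hx =>
      (dk x (Ico_subset_Icc_self hx)).mono_of_mem_nhdsWithin (hnhds x hx)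
  have hk0 : k 0 = 0 := by rw [hkdef]; dsimp only; linarith [hid0]
  have hident : ∀ t ∈ Icc (0:ℝ) T, (1 + v t) * h t = (U t)^2 * (1 + v t)^2 + (w t)^2 := by
    intro t ht
    have := hconst t ht
    rw [hk0] at this
    rw [hkdef] at this
    dsimp only at this
    linarith
  set g : ℝ → ℝ := fun s => 1 + v s + h s with hgdef
  have cg : ContinuousOn g (Icc 0 T) := (continuousOn_const.add cv).add ch
  have dg : ∀ t ∈ Icc (0:ℝ) T, HasDerivWithinAt g
      (γ * w t + (-2 * Q t * U t * (1 + v t) + (3*(U t)^2 - 2*P t) * w t)) (Icc 0 T) t :=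
    fun t ht => ((hv t ht).const_add 1).add (hh t ht)
  -- key monotonicity step
  have key : ∀ u, u ∈ Icc (0:ℝ) T → (∀ s, s ∈ Ico (0:ℝ) u → 0 ≤ g s) →
      g 0 ≤ Real.exp (C*u) * g u := by
    intro u hu hge
    set ψ : ℝ → ℝ := fun s => Real.exp (C*s) * g s with hψdef
    have hsub : Icc (0:ℝ) u ⊆ Icc 0 T := Icc_subset_Icc (le_refl _) hu.2
    have cψ : ContinuousOn ψ (Icc 0 u) :=
      ((Real.continuous_exp.comp (continuous_const.mul continuous_id)).continuousOn).mul
        (cg.mono hsub)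
    have hderiv : ∀ x ∈ interior (Icc (0:ℝ) u),
        HasDerivAt ψ (Real.exp (C*x) * (C*1) * g x
          + Real.exp (C*x) * (γ * w x + (-2 * Q x * U x * (1 + v x)
            + (3*(U x)^2 - 2*P x) * w x))) x := by
      intro x hx
      rw [interior_Icc] at hx
      have hxT : x ∈ Icc (0:ℝ) T := ⟨hx.1.le, le_trans hx.2.le hu.2⟩
      have hxTnh : Icc (0:ℝ) T ∈ 𝓝 x := by
        rcases lt_or_eq_of_le (le_trans hx.2.le hu.2) with hlt | heq
        · exact Icc_mem_nhds hx.1 hlt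
        · exfalso
          -- x < u ≤ T so x < T; if x = T contradiction with x < u ≤ T
          have : x < T := lt_of_lt_of_le hx.2 hu.2
          exact absurd heq this.ne
      have dgx := (dg x hxT).hasDerivAt hxTnh
      have hexp : HasDerivAt (fun s => Real.exp (C*s)) (Real.exp (C*x) * (C*1)) x :=
        ((hasDerivAt_id x).const_mul C).exp
      exact hexp.mul dgx
    have hmono : MonotoneOn ψ (Icc 0 u) := by
      apply monotoneOn_of_deriv_nonneg (convex_Icc 0 u) cψ
      · intro x hx
        exact ((hderiv x hx).differentiableAt).differentiableWithinAt
      · intro x hx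
        rw [(hderiv x hx).deriv]
        have hxIoo : x ∈ Ioo (0:ℝ) u := by rwa [interior_Icc] at hx
        have hxT : x ∈ Icc (0:ℝ) T := ⟨hxIoo.1.le, le_trans hxIoo.2.le hu.2⟩
        have hgx : 0 ≤ g x := hge x ⟨hxIoo.1.le, hxIoo.2⟩
        have hgs := gron_step γ C (U x) (1 + v x) (w x) (h x) (P x) (Q x)
          (hident x hxT) (by rw [hgdef] at hgx; dsimp only at hgx; linarith) (hC x hxT)
        have hfac : Real.exp (C*x) * (C*1) * g x
            + Real.exp (C*x) * (γ * w x + (-2 * Q x * U x * (1 + v x)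
              + (3*(U x)^2 - 2*P x) * w x))
            = Real.exp (C*x) * ((γ + 3*(U x)^2 - 2*P x)*(w x)
              - 2*(Q x)*(U x)*(1 + v x) + C*((1 + v x)+(h x))) := by
          rw [hgdef]; dsimp only; ring
        rw [hfac]
        exact mul_nonneg (Real.exp_pos _).le hgs
    have h0u : (0:ℝ) ∈ Icc (0:ℝ) u := ⟨le_refl _, hu.1⟩
    have huu : u ∈ Icc (0:ℝ) u := ⟨hu.1, le_refl _⟩
    have := hmono h0u huu hu.1
    rw [hψdef] at this
    dsimp only at this
    rwa [mul_zero, Real.exp_zero, one_mul] at this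
  -- positivity of g on all of Icc 0 T
  have hg0 : 0 < g 0 := by rw [hgdef]; dsimp only; linarith
  have gpos : ∀ t ∈ Icc (0:ℝ) T, 0 < g t := by
    by_contra hcon
    push_neg at hcon
    obtain ⟨t₂, ht₂, hgt₂⟩ := hcon
    set S : Set ℝ := Icc 0 t₂ ∩ g ⁻¹' (Iic 0) with hSdef
    have hSclosed : IsClosed S := by
      apply (cg.mono (Icc_subset_Icc (le_refl _) ht₂.2)).preimage_isClosed_of_isClosed
        isClosed_Icc isClosed_Iic
    have hSne : S.Nonempty := ⟨t₂, ⟨ht₂.1, le_refl _⟩, hgt₂⟩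
    have hSbdd : BddBelow S := ⟨0, fun s hs => hs.1.1⟩
    set uu := sInf S with huu
    have huuS : uu ∈ S := hSclosed.csInf_mem hSne hSbdd
    have huu0 : 0 < uu := by
      rcases lt_or_eq_of_le huuS.1.1 with hlt | heq
      · exact hlt
      · exfalso
        have : g uu ≤ 0 := huuS.2
        rw [← heq] at this
        linarith
    have huuT : uu ∈ Icc (0:ℝ) T := ⟨huuS.1.1, le_trans huuS.1.2 ht₂.2⟩
    have hIco : ∀ s, s ∈ Ico (0:ℝ) uu → 0 ≤ g s := by
      intro s hs
      by_contra hneg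
      push_neg at hneg
      have hsS : s ∈ S := ⟨⟨hs.1, le_trans hs.2.le huuS.1.2⟩, hneg.le⟩
      have := csInf_le hSbdd hsS
      rw [← huu] at this
      linarith [hs.2]
    have hkey := key uu huuT hIco
    have hexp := Real.exp_pos (C*uu)
    have hgu : g uu ≤ 0 := huuS.2
    have hprod : Real.exp (C*uu) * g uu ≤ 0 :=
      mul_nonpos_iff.2 (Or.inl ⟨hexp.le, hgu⟩)
    linarith [hg0, hkey, hprod]
  -- final assembly
  intro t ht
  refine ⟨hident t ht, ?_, ?_, ?_⟩
  · have hqh : 0 ≤ (1 + v t) * h t := by rw [hident t ht]; positivity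
    exact (pos_of_sum_prod hqh (by have := gpos t ht; rw [hgdef] at this; dsimp only at this; linarith)).1
  · have hqh : 0 ≤ (1 + v t) * h t := by rw [hident t ht]; positivity
    exact (pos_of_sum_prod hqh (by have := gpos t ht; rw [hgdef] at this; dsimp only at this; linarith)).2
  · have hkey := key t ht (fun s hs => (gpos s ⟨hs.1, le_trans hs.2.le ht.2⟩).le)
    have hmul := mul_le_mul_of_nonneg_left hkey (Real.exp_pos (-C*t)).le
    have hcancel : Real.exp (-C*t) * (Real.exp (C*t) * g t) = g t := by
      rw [← mul_assoc, ← Real.exp_add]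
      norm_num
    rw [hcancel] at hmul
    rw [hgdef] at hmul
    dsimp only at hmul
    exact hmul

end Helpers

/-- propagation of the identity `qh = U²q² + w²`, of positivity of
`q` and `h`, and the exponential lower bound on `q + h`. -/
theorem stmt5 (γ T c : ℝ) (hT : 0 ≤ T) (hc : 0 < c) (Y₀ : El) (Ys : ℝ → El)
    (hmem : memF Y₀)
    (hq : eLpNorm Y₀.q ⊤ volume < ⊤) (hw : eLpNorm Y₀.w ⊤ volume < ⊤)
    (hh : eLpNorm Y₀.h ⊤ volume < ⊤)
    (hid : ∀ᵐ ξ : ℝ ∂volume,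
      Y₀.q ξ * Y₀.h ξ = (Y₀.U ξ) ^ 2 * (Y₀.q ξ) ^ 2 + (Y₀.w ξ) ^ 2 ∧
      0 ≤ Y₀.q ξ ∧ 0 ≤ Y₀.h ξ ∧ c ≤ Y₀.q ξ + Y₀.h ξ)
    (hsol : IsSolutionOn (Gmap γ) Ys T) (h0 : Ys 0 = Y₀) :
    ∃ C : ℝ, 0 < Real.exp (-C * T) * c ∧
      ∀ t ∈ Icc (0 : ℝ) T, ∀ᵐ ξ : ℝ ∂volume,
        (Ys t).q ξ * (Ys t).h ξ
          = ((Ys t).U ξ) ^ 2 * ((Ys t).q ξ) ^ 2 + ((Ys t).w ξ) ^ 2 ∧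
        0 ≤ (Ys t).q ξ ∧ 0 ≤ (Ys t).h ξ ∧
        Real.exp (-C * t) * (Y₀.q ξ + Y₀.h ξ) ≤ (Ys t).q ξ + (Ys t).h ξ ∧
        Real.exp (-C * T) * c ≤ Real.exp (-C * t) * (Y₀.q ξ + Y₀.h ξ) := by
  obtain ⟨hmemYs, hderivYs, hcontYs⟩ := hsol
  obtain ⟨M, hM0, hMb⟩ := exists_normF_bound hmemYs hcontYs
  have hcomp : ∀ t ∈ Icc (0:ℝ) T, nn ⊤ (Ys t).zeta ≤ M ∧ nn 2 (Ys t).U ≤ M ∧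
      nn ⊤ (Ys t).U ≤ M ∧ nn 2 (Ys t).v ≤ M ∧ nn 2 (Ys t).h ≤ M := by
    intro t ht
    have hn := hMb t ht
    unfold normF at hn
    have n1 := nn_nonneg ⊤ (Ys t).zeta
    have n2 := nn_nonneg 2 (Ys t).U
    have n3 := nn_nonneg ⊤ (Ys t).U
    have n4 := nn_nonneg ⊤ (Ys t).H
    have n5 := nn_nonneg 2 (Ys t).v
    have n6 := nn_nonneg 2 (Ys t).w
    have n7 := nn_nonneg 2 (Ys t).h
    exact ⟨by linarith, by linarith, by linarith, by linarith, by linarith⟩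
  have hcz : ∀ ξ : ℝ, ContinuousOn (fun t => (Ys t).zeta ξ) (Icc 0 T) :=
    fun ξ t ht => ((hderivYs t ht ξ).1).continuousWithinAt
  have hcU : ∀ ξ : ℝ, ContinuousOn (fun t => (Ys t).U ξ) (Icc 0 T) :=
    fun ξ t ht => ((hderivYs t ht ξ).2.1).continuousWithinAt
  have haez : ∀ᵐ ξ : ℝ ∂volume, ∀ t ∈ Icc (0:ℝ) T, |(Ys t).zeta ξ| ≤ M := by
    apply ae_forall_time_bound hT _ hcz
    intro t ht
    obtain ⟨m1, m2, m3, m4, m5, m6, f1, f2, f3, f4, f5, f6, f7⟩ := hmemYs t ht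
    filter_upwards [ae_abs_le_nn_top f1] with ξ hξ
    exact le_trans hξ (hcomp t ht).1
  have haeU : ∀ᵐ ξ : ℝ ∂volume, ∀ t ∈ Icc (0:ℝ) T, |(Ys t).U ξ| ≤ M := by
    apply ae_forall_time_bound hT _ hcU
    intro t ht
    obtain ⟨m1, m2, m3, m4, m5, m6, f1, f2, f3, f4, f5, f6, f7⟩ := hmemYs t ht
    filter_upwards [ae_abs_le_nn_top f3] with ξ hξ
    exact le_trans hξ (hcomp t ht).2.2.1
  obtain ⟨K, hK0, hKP⟩ := PQ_bound γ M hM0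
  have hPQ : ∀ t ∈ Icc (0:ℝ) T, ∀ ξ : ℝ, |(Ys t).zeta ξ| ≤ M →
      |Pmap γ (Ys t) ξ| ≤ Real.exp M * K ∧ |Qmap γ (Ys t) ξ| ≤ Real.exp M * K := by
    intro t ht ξ hz
    obtain ⟨hc1, hc2, hc3, hc4, hc5⟩ := hcomp t ht
    have := hKP (Ys t) (hmemYs t ht) hc1 hc2 hc3 hc4 hc5 ξ
    have hmono : Real.exp |(Ys t).zeta ξ| ≤ Real.exp M := Real.exp_le_exp.2 hz
    constructor
    · exact le_trans this.1 (mul_le_mul_of_nonneg_right hmono hK0)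
    · exact le_trans this.2 (mul_le_mul_of_nonneg_right hmono hK0)
  set C := (|γ| + 3*M^2 + 4*(Real.exp M * K))/2 with hCdef
  have hexpK : 0 ≤ Real.exp M * K := mul_nonneg (Real.exp_pos _).le hK0
  have hC0 : 0 ≤ C := by
    have := abs_nonneg γ
    have := sq_nonneg M
    rw [hCdef]
    linarith
  refine ⟨C, mul_pos (Real.exp_pos _) hc, ?_⟩
  intro t ht
  filter_upwards [haez, haeU, hid] with ξ hzb hUb hidξ
  have hres := ode_key T γ C hT (fun s => (Ys s).U ξ) (fun s => (Ys s).v ξ)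
    (fun s => (Ys s).w ξ) (fun s => (Ys s).h ξ)
    (fun s => Pmap γ (Ys s) ξ) (fun s => Qmap γ (Ys s) ξ)
    (fun s hs => (hderivYs s hs ξ).2.1)
    (fun s hs => (hderivYs s hs ξ).2.2.2.1)
    (fun s hs => (hderivYs s hs ξ).2.2.2.2.1)
    (fun s hs => (hderivYs s hs ξ).2.2.2.2.2)
    ?_ ?_ ?_
  · obtain ⟨r1, r2, r3, r4⟩ := hres t ht
    refine ⟨r1, r2, r3, ?_, ?_⟩
    · have r4' : Real.exp (-C*t) * (1 + (Ys 0).v ξ + (Ys 0).h ξ)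
          ≤ 1 + (Ys t).v ξ + (Ys t).h ξ := r4
      rw [h0] at r4'
      exact r4'
    · have hqh0 : c ≤ Y₀.q ξ + Y₀.h ξ := hidξ.2.2.2
      have hee : Real.exp (-C*T) ≤ Real.exp (-C*t) := by
        apply Real.exp_le_exp.2
        have : C * t ≤ C * T := mul_le_mul_of_nonneg_left ht.2 hC0
        linarith
      calc Real.exp (-C*T) * c ≤ Real.exp (-C*t) * c :=
            mul_le_mul_of_nonneg_right hee hc.le
        _ ≤ Real.exp (-C*t) * (Y₀.q ξ + Y₀.h ξ) :=
            mul_le_mul_of_nonneg_left hqh0 (Real.exp_pos _).le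
  · -- the coefficient bound
    intro s hs
    show |γ| + 3*((Ys s).U ξ)^2 + 2*|Pmap γ (Ys s) ξ| + 2*|Qmap γ (Ys s) ξ| ≤ 2*C
    have hU2 : ((Ys s).U ξ)^2 ≤ M^2 := by
      have := hUb s hs
      nlinarith [abs_nonneg ((Ys s).U ξ), sq_abs ((Ys s).U ξ)]
    obtain ⟨hP, hQ⟩ := hPQ s hs ξ (hzb s hs)
    have haP := abs_nonneg (Pmap γ (Ys s) ξ)
    have haQ := abs_nonneg (Qmap γ (Ys s) ξ)
    rw [hCdef]
    linarith
  · -- identity at time 0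
    show (1 + (Ys 0).v ξ) * (Ys 0).h ξ = ((Ys 0).U ξ)^2 * (1 + (Ys 0).v ξ)^2 + ((Ys 0).w ξ)^2
    rw [h0]
    exact hidξ.1
  · -- positivity at time 0
    show (0:ℝ) < 1 + (Ys 0).v ξ + (Ys 0).h ξ
    rw [h0]
    have h1 := hidξ.2.1
    have h2 := hidξ.2.2.1
    have h3 := hidξ.2.2.2
    have : Y₀.q ξ = 1 + Y₀.v ξ := rfl
    rw [this] at h3
    linarith
end

section
/- Let n, s ≥ 1, f : ℝⁿ → ℝⁿ, and let D : ℝⁿ → (real symmetric n×n matrices) and d : ℝⁿ → ℝⁿ satisfy the invariance D(y + t f(z)) = D(y) and d(y + t f(z)) = d(y) for all y, z ∈ ℝⁿ and t ∈ ℝ. Define I(y) = yᵀD(y)y + d(y)ᵀy and assume that 2 yᵀD(y)f(y) + d(y)ᵀf(y) = 0 for all y ∈ ℝⁿ (so I is a first integral of y' = f(y)). Let (a_{ij})_{1≤i,j≤s} and (b_i)_{1≤i≤s} be real Runge–Kutta coefficients satisfying b_i a_{ij} + b_j a_{ji} = b_i b_j for all i, j. Suppose h ∈ ℝ, y₀ ∈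 ℝⁿ and K₁, …, K_s ∈ ℝⁿ satisfy the stage equations K_i = f(y₀ + h Σ_{j=1}^s a_{ij} K_j) for i = 1, …, s, and set y₁ = y₀ + h Σ_{i=1}^s b_i K_i. Then I(y₁) = I(y₀). -/
open MeasureTheory Real Filter Set
open scoped ENNReal NNReal Topology

open Matrix

section RKaux
variable {n s : ℕ}

lemma rk_dp_sum (x : Fin n → ℝ) (c : Fin s → ℝ) (K : Fin s → Fin n → ℝ) :
    x ⬝ᵥ (∑ j, c j • K j) = ∑ j, c j * (x ⬝ᵥ K j) := by
  induction (Finset.univ : Finset (Fin s)) using Finset.induction with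
  | empty => simp
  | insert _ _ hx ih => simp [Finset.sum_insert hx, dotProduct_add, dotProduct_smul, ih, smul_eq_mul]

lemma rk_dp_sum' (x : Fin n → ℝ) (c : Fin s → ℝ) (K : Fin s → Fin n → ℝ) :
    (∑ j, c j • K j) ⬝ᵥ x = ∑ j, c j * (K j ⬝ᵥ x) := by
  rw [dotProduct_comm, rk_dp_sum]
  exact Finset.sum_congr rfl fun j _ => by rw [dotProduct_comm]

lemma rk_mulVec_sum (C : Matrix (Fin n) (Fin n) ℝ) (c : Fin s → ℝ) (K : Fin s → Fin n → ℝ)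
    (x : Fin n → ℝ) :
    x ⬝ᵥ C.mulVec (∑ j, c j • K j) = ∑ j, c j * (x ⬝ᵥ C.mulVec (K j)) := by
  rw [show C *ᵥ ∑ j, c j • K j = ∑ j, c j • (C *ᵥ K j) by
        simp [Matrix.mulVec_sum, Matrix.mulVec_smul]]
  exact rk_dp_sum x c _

lemma rk_symmBF (C : Matrix (Fin n) (Fin n) ℝ) (hC : C.IsSymm) (x z : Fin n → ℝ) :
    x ⬝ᵥ C.mulVec z = z ⬝ᵥ C.mulVec x := by
  rw [dotProduct_mulVec, ← mulVec_transpose, hC.eq, dotProduct_comm]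

lemma rk_aux (C : Matrix (Fin n) (Fin n) ℝ) (hC : C.IsSymm)
    (e : Fin n → ℝ) (a : Fin s → Fin s → ℝ) (b : Fin s → ℝ)
    (hab : ∀ i j, b i * a i j + b j * a j i = b i * b j)
    (h : ℝ) (y₀ : Fin n → ℝ) (K g : Fin s → Fin n → ℝ)
    (hg : ∀ i, g i = y₀ + ∑ j, (h * a i j) • K j)
    (key : ∀ i, 2 * (g i ⬝ᵥ C.mulVec (K i)) + e ⬝ᵥ K i = 0) :
    (y₀ + ∑ i, (h * b i) • K i) ⬝ᵥ C.mulVec (y₀ + ∑ i, (h * b i) • K i)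
      + e ⬝ᵥ (y₀ + ∑ i, (h * b i) • K i) = y₀ ⬝ᵥ C.mulVec y₀ + e ⬝ᵥ y₀ := by
  classical
  set X : Fin s → Fin s → ℝ := fun i j => K i ⬝ᵥ C.mulVec (K j) with hX
  set t : Fin s → ℝ := fun i => h * b i with ht
  set w : Fin n → ℝ := ∑ i, t i • K i with hw
  have hXsym : ∀ i j, X i j = X j i := fun i j => rk_symmBF C hC _ _
  have hA2 : w ⬝ᵥ C.mulVec y₀ = ∑ i, t i * (y₀ ⬝ᵥ C.mulVec (K i)) := by
    rw [hw, rk_dp_sum']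
    exact Finset.sum_congr rfl fun i _ => by rw [rk_symmBF C hC]
  have hA3 : y₀ ⬝ᵥ C.mulVec w = ∑ i, t i * (y₀ ⬝ᵥ C.mulVec (K i)) := by
    rw [hw, rk_mulVec_sum]
  have hA4 : w ⬝ᵥ C.mulVec w = ∑ i, ∑ j, (t i * t j) * X i j := by
    rw [hw, rk_dp_sum']
    refine Finset.sum_congr rfl fun i _ => ?_
    rw [rk_mulVec_sum, Finset.mul_sum]
    exact Finset.sum_congr rfl fun j _ => by ring
  have hE : e ⬝ᵥ w = ∑ i, t i * (e ⬝ᵥ K i) := by rw [hw, rk_dp_sum]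
  have hcomb : ∑ i, t i * (2 * (y₀ ⬝ᵥ C.mulVec (K i)) + e ⬝ᵥ K i)
      = 2 * (∑ i, t i * (y₀ ⬝ᵥ C.mulVec (K i))) + ∑ i, t i * (e ⬝ᵥ K i) := by
    rw [Finset.mul_sum, ← Finset.sum_add_distrib]
    exact Finset.sum_congr rfl fun i _ => by ring
  have e2 : ∀ i, y₀ ⬝ᵥ C.mulVec (K i)
      = g i ⬝ᵥ C.mulVec (K i) - ∑ j, (h * a i j) * X j i := by
    intro i
    have hgi : g i ⬝ᵥ C.mulVec (K i)
        = y₀ ⬝ᵥ C.mulVec (K i) + ∑ j, (h * a i j) * X j i := by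
      rw [hg i, add_dotProduct, rk_dp_sum']
    linarith [hgi]
  have e3 : ∑ i, t i * (2 * (y₀ ⬝ᵥ C.mulVec (K i)) + e ⬝ᵥ K i)
      = - ∑ i, ∑ j, (2 * t i * (h * a i j)) * X j i := by
    rw [← Finset.sum_neg_distrib]
    refine Finset.sum_congr rfl fun i _ => ?_
    have hs : (2 * t i) * ∑ j, (h * a i j) * X j i
        = ∑ j, (2 * t i * (h * a i j)) * X j i := by
      rw [Finset.mul_sum]
      exact Finset.sum_congr rfl fun j _ => by ring
    rw [e2 i, show t i * (2 * (g i ⬝ᵥ C.mulVec (K i) - ∑ j, (h * a i j) * X j i) + e ⬝ᵥ K i)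
        = t i * (2 * (g i ⬝ᵥ C.mulVec (K i)) + e ⬝ᵥ K i)
          - (2 * t i) * ∑ j, (h * a i j) * X j i from by ring,
      key i, mul_zero, zero_sub, hs]
  have double : ∑ i, ∑ j, (2 * t i * (h * a i j)) * X j i
      = ∑ i, ∑ j, (t i * t j) * X i j := by
    have swap : ∑ i, ∑ j, (t i * (h * a i j)) * X j i
        = ∑ i, ∑ j, (t j * (h * a j i)) * X i j := Finset.sum_comm
    have split : ∑ i, ∑ j, (2 * t i * (h * a i j)) * X j i
        = (∑ i, ∑ j, (t i * (h * a i j)) * X j i)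
          + ∑ i, ∑ j, (t i * (h * a i j)) * X j i := by
      rw [← Finset.sum_add_distrib]
      refine Finset.sum_congr rfl fun i _ => ?_
      rw [← Finset.sum_add_distrib]
      exact Finset.sum_congr rfl fun j _ => by ring
    rw [split]
    nth_rewrite 2 [swap]
    rw [← Finset.sum_add_distrib]
    refine Finset.sum_congr rfl fun i _ => ?_
    rw [← Finset.sum_add_distrib]
    refine Finset.sum_congr rfl fun j _ => ?_
    rw [hXsym j i, show t i * (h * a i j) * X i j + t j * (h * a j i) * X i j
        = (h * h) * (b i * a i j + b j * a j i) * X i j from by rw [ht]; ring, hab i j,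
      ht]
    ring
  simp only [mulVec_add, dotProduct_add, add_dotProduct]
  rw [hA2, hA3, hA4, hE]
  have := e3
  rw [hcomb] at this
  rw [double] at this
  linarith [this]
end RKaux

open Matrix in
/-- a Runge–Kutta scheme whose coefficients satisfy
`bᵢaᵢⱼ + bⱼaⱼᵢ = bᵢbⱼ` conserves the invariant `I(y) = yᵀD(y)y + d(y)ᵀy`. -/
theorem stmt16 (n s : ℕ) (hn : 1 ≤ n) (hs : 1 ≤ s)
    (f : (Fin n → ℝ) → (Fin n → ℝ))
    (D : (Fin n → ℝ) → Matrix (Fin n) (Fin n) ℝ)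
    (d : (Fin n → ℝ) → (Fin n → ℝ))
    (hsymm : ∀ y : Fin n → ℝ, (D y).IsSymm)
    (hDinv : ∀ (y z : Fin n → ℝ) (t : ℝ), D (y + t • f z) = D y)
    (hdinv : ∀ (y z : Fin n → ℝ) (t : ℝ), d (y + t • f z) = d y)
    (hint : ∀ y : Fin n → ℝ,
      2 * (y ⬝ᵥ (D y).mulVec (f y)) + d y ⬝ᵥ f y = 0)
    (a : Fin s → Fin s → ℝ) (b : Fin s → ℝ)
    (hab : ∀ i j : Fin s, b i * a i j + b j * a j i = b i * b j)
    (h : ℝ) (y₀ : Fin n → ℝ) (K : Fin s → (Fin n → ℝ))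
    (hK : ∀ i : Fin s, K i = f (y₀ + h • ∑ j : Fin s, a i j • K j)) :
    (y₀ + h • ∑ i : Fin s, b i • K i) ⬝ᵥ
        (D (y₀ + h • ∑ i : Fin s, b i • K i)).mulVec
          (y₀ + h • ∑ i : Fin s, b i • K i) +
      d (y₀ + h • ∑ i : Fin s, b i • K i) ⬝ᵥ (y₀ + h • ∑ i : Fin s, b i • K i)
      = y₀ ⬝ᵥ (D y₀).mulVec y₀ + d y₀ ⬝ᵥ y₀ := by
    classical
  have hscale : ∀ (c : Fin s → ℝ), h • ∑ j : Fin s, c j • K j = ∑ j : Fin s, (h * c j) • K j := by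
    intro c
    rw [Finset.smul_sum]
    exact Finset.sum_congr rfl fun j _ => smul_smul h (c j) (K j)
  have hKf : ∀ i, K i = f (y₀ + ∑ j : Fin s, (h * a i j) • K j) := by
    intro i; rw [hK i, hscale]
  have inv : ∀ (c : Fin s → ℝ) (S : Finset (Fin s)),
      D (y₀ + ∑ j ∈ S, c j • K j) = D y₀ ∧ d (y₀ + ∑ j ∈ S, c j • K j) = d y₀ := by
    intro c S
    induction S using Finset.induction with
    | empty => simp
    | @insert i S hx ih =>
      have hre : y₀ + (c i • K i + ∑ j ∈ S, c j • K j)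
          = (y₀ + ∑ j ∈ S, c j • K j) + c i • K i := by abel
      rw [Finset.sum_insert hx, hre, hKf i]
      exact ⟨(hDinv _ _ _).trans ih.1, (hdinv _ _ _).trans ih.2⟩
  have key : ∀ i, 2 * ((y₀ + ∑ j : Fin s, (h * a i j) • K j) ⬝ᵥ (D y₀).mulVec (K i))
      + d y₀ ⬝ᵥ K i = 0 := by
    intro i
    have hi := hint (y₀ + ∑ j : Fin s, (h * a i j) • K j)
    rw [(inv _ _).1, (inv _ _).2, ← hKf i] at hi
    exact hi
  rw [show y₀ + h • ∑ i : Fin s, b i • K i = y₀ + ∑ i : Fin s, (h * b i) • K i from by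
    rw [hscale]]
  rw [(inv (fun i => h * b i) Finset.univ).1, (inv (fun i => h * b i) Finset.univ).2]
  exact rk_aux (D y₀) (hsymm y₀) (d y₀) a b hab h y₀ K
    (fun i => y₀ + ∑ j : Fin s, (h * a i j) • K j) (fun i => rfl) key
end

section
/- Let I = [a,b] be a compact interval with a < b and let q, w, h, U : I → ℝ be measurable functions such that q ≥ 0, h ≥ 0, q + h = 1 almost everywhere, qh = q²U² + w² almost everywhere, and ∫_I q² dξ > 0. Define the averages q̄ = (1/(b−a))∫_I q dξ, w̄ = (1/(b−a))∫_I w dξ, h̄ = (1/(b−a))∫_I h dξ, and the weighted average Ū = (∫_I q²U dξ)/(∫_I q² dξ). Then q̄ + h̄ = 1 and q̄ h̄ ≥ Ū²q̄² + w̄². -/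
open MeasureTheory Real Filter Set
open scoped ENNReal NNReal Topology

open MeasureTheory in
lemma cs_integral {α : Type*} {m : MeasurableSpace α} (μ : Measure α) (f g : α → ℝ)
    (hf : Integrable (fun x => f x ^ 2) μ) (hg : Integrable (fun x => g x ^ 2) μ)
    (hfg : Integrable (fun x => f x * g x) μ) :
    (∫ x, f x * g x ∂μ) ^ 2 ≤ (∫ x, f x ^ 2 ∂μ) * (∫ x, g x ^ 2 ∂μ) := by
  have key : ∀ t : ℝ, 0 ≤ (∫ x, f x ^ 2 ∂μ) * (t * t) + (2 * ∫ x, f x * g x ∂μ) * t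
      + (∫ x, g x ^ 2 ∂μ) := by
    intro t
    have h1 : Integrable (fun x => f x ^ 2 * (t*t) + (2 * (f x * g x)) * t) μ :=
      ((hf.mul_const _).add ((hfg.const_mul 2).mul_const t))
    have h0 : 0 ≤ ∫ x, (t * f x + g x) ^ 2 ∂μ :=
      integral_nonneg fun x => sq_nonneg _
    calc (0:ℝ) ≤ ∫ x, (t * f x + g x) ^ 2 ∂μ := h0
      _ = ∫ x, (f x ^ 2 * (t*t) + (2 * (f x * g x)) * t) + g x ^ 2 ∂μ := by
          apply integral_congr_ae; filter_upwards with x; ring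
      _ = (∫ x, f x ^ 2 * (t*t) + (2 * (f x * g x)) * t ∂μ) + ∫ x, g x ^ 2 ∂μ :=
          integral_add h1 hg
      _ = (∫ x, f x ^ 2 ∂μ) * (t*t) + (2 * ∫ x, f x * g x ∂μ) * t + ∫ x, g x ^ 2 ∂μ := by
          rw [integral_add (hf.mul_const _) ((hfg.const_mul 2).mul_const t),
            integral_mul_const, integral_mul_const, integral_const_mul]
  have hd := discrim_le_zero key
  rw [discrim] at hd
  nlinarith [hd]

set_option maxHeartbeats 1600000 in
/-- Jensen-type inequality for the cell averages, the key step in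
the construction of the approximate initial data. -/
theorem stmt18 (a b : ℝ) (hab : a < b) (q w h U : ℝ → ℝ)
    (hq : Measurable q) (hw : Measurable w) (hh : Measurable h)
    (hU : Measurable U)
    (hyp : ∀ᵐ ξ ∂(volume.restrict (Icc a b)),
      0 ≤ q ξ ∧ 0 ≤ h ξ ∧ q ξ + h ξ = 1 ∧
      q ξ * h ξ = (q ξ) ^ 2 * (U ξ) ^ 2 + (w ξ) ^ 2)
    (hpos : 0 < ∫ ξ in Icc a b, (q ξ) ^ 2) :
    (1 / (b - a)) * (∫ ξ in Icc a b, q ξ) +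
        (1 / (b - a)) * (∫ ξ in Icc a b, h ξ) = 1 ∧
    ((∫ ξ in Icc a b, (q ξ) ^ 2 * U ξ) / (∫ ξ in Icc a b, (q ξ) ^ 2)) ^ 2 *
          ((1 / (b - a)) * ∫ ξ in Icc a b, q ξ) ^ 2 +
        ((1 / (b - a)) * ∫ ξ in Icc a b, w ξ) ^ 2
      ≤ ((1 / (b - a)) * ∫ ξ in Icc a b, q ξ) *
          ((1 / (b - a)) * ∫ ξ in Icc a b, h ξ) := by
  classical
  set μ := (volume.restrict (Icc a b)) with hμ
  have hL : (0:ℝ) < b - a := sub_pos.mpr hab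
  have hfin : IsFiniteMeasure μ := by
    rw [hμ]; exact ⟨by rw [Measure.restrict_apply_univ]; exact measure_Icc_lt_top⟩
  -- a.e. bounds
  have hb : ∀ᵐ ξ ∂μ, 0 ≤ q ξ ∧ q ξ ≤ 1 ∧ 0 ≤ h ξ ∧ h ξ ≤ 1 ∧ |w ξ| ≤ 1 ∧
      |q ξ ^ 2 * U ξ| ≤ 1 ∧ q ξ ^ 2 * U ξ ^ 2 ≤ 1 := by
    filter_upwards [hyp] with ξ ⟨hq0, hh0, hqh, heq⟩
    have hq1 : q ξ ≤ 1 := by linarith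
    have hh1 : h ξ ≤ 1 := by linarith
    have hw2 : w ξ ^ 2 ≤ 1 := by nlinarith
    have hqu2 : q ξ ^ 2 * U ξ ^ 2 ≤ 1 := by nlinarith
    refine ⟨hq0, hq1, hh0, hh1, abs_le.2 ⟨by nlinarith, by nlinarith⟩, ?_, hqu2⟩
    have : (q ξ ^ 2 * U ξ) ^ 2 ≤ 1 := by
      have : (q ξ ^ 2 * U ξ) ^ 2 = (q ξ ^ 2 * U ξ ^ 2) * q ξ ^ 2 := by ring
      nlinarith
    exact abs_le.2 ⟨by nlinarith, by nlinarith⟩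
  -- integrability of everything in sight via boundedness
  have mkInt : ∀ (f : ℝ → ℝ), Measurable f → (∀ᵐ ξ ∂μ, ‖f ξ‖ ≤ 1) → Integrable f μ := by
    intro f hfm hfb
    exact Integrable.mono' (integrable_const 1) hfm.aestronglyMeasurable hfb
  have hiq : Integrable q μ := mkInt q hq (by
    filter_upwards [hb] with ξ hξ
    rw [Real.norm_eq_abs, abs_le]
    exact ⟨by linarith [hξ.1], hξ.2.1⟩)
  have hih : Integrable h μ := mkInt h hh (by
    filter_upwards [hb] with ξ hξ
    rw [Real.norm_eq_abs, abs_le]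
    exact ⟨by linarith [hξ.2.2.1], hξ.2.2.2.1⟩)
  have hiq2 : Integrable (fun ξ => q ξ ^ 2) μ := mkInt _ (hq.pow_const 2)
    (by filter_upwards [hb] with ξ hξ;
        rw [Real.norm_eq_abs, abs_le]; constructor <;> nlinarith [hξ.1, hξ.2.1])
  have hiq2U : Integrable (fun ξ => q ξ ^ 2 * U ξ) μ := mkInt _ ((hq.pow_const 2).mul hU)
    (by filter_upwards [hb] with ξ hξ; rw [Real.norm_eq_abs]; exact hξ.2.2.2.2.2.1)
  have hiq2U2 : Integrable (fun ξ => q ξ ^ 2 * U ξ ^ 2) μ :=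
    mkInt _ ((hq.pow_const 2).mul (hU.pow_const 2))
    (by filter_upwards [hb] with ξ hξ; rw [Real.norm_eq_abs, abs_le]
        constructor <;> nlinarith [hξ.1, hξ.2.2.2.2.2.2, sq_nonneg (q ξ * U ξ)])
  have hiw : Integrable w μ := mkInt w hw
    (by filter_upwards [hb] with ξ hξ; rw [Real.norm_eq_abs]; exact hξ.2.2.2.2.1)
  have hiw2 : Integrable (fun ξ => w ξ ^ 2) μ := mkInt _ (hw.pow_const 2)
    (by filter_upwards [hb] with ξ hξ
        have := hξ.2.2.2.2.1
        rw [Real.norm_eq_abs, abs_le]; constructor <;> nlinarith [abs_nonneg (w ξ), sq_abs (w ξ), neg_abs_le (w ξ), le_abs_self (w ξ)])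
  -- notations
  set A := ∫ ξ in Icc a b, q ξ with hA
  set B := ∫ ξ in Icc a b, h ξ with hB
  set C := ∫ ξ in Icc a b, q ξ ^ 2 with hC
  set D := ∫ ξ in Icc a b, q ξ ^ 2 * U ξ with hD
  set E := ∫ ξ in Icc a b, q ξ ^ 2 * U ξ ^ 2 with hE
  set W := ∫ ξ in Icc a b, w ξ with hW
  set W2 := ∫ ξ in Icc a b, w ξ ^ 2 with hW2
  set L := b - a with hLdef
  have hC0 : 0 < C := hpos
  -- total mass
  have hμuniv : (μ Set.univ).toReal = L := by
    rw [hμ, Measure.restrict_apply_univ, Real.volume_Icc, ENNReal.toReal_ofReal hL.le]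
  -- A + B = L
  have hAB : A + B = L := by
    rw [hA, hB, ← integral_add hiq hih]
    have : ∫ ξ, (q ξ + h ξ) ∂μ = ∫ ξ, (1:ℝ) ∂μ := by
      apply integral_congr_ae; filter_upwards [hyp] with ξ hξ; exact hξ.2.2.1
    rw [this, integral_const, smul_eq_mul, mul_one, measureReal_def, hμuniv]
  -- E + W2 = A - C
  have hEW : E + W2 = A - C := by
    have h1 : ∫ ξ, (q ξ ^ 2 * U ξ ^ 2 + w ξ ^ 2) ∂μ = ∫ ξ, (q ξ - q ξ ^ 2) ∂μ := by
      apply integral_congr_ae; filter_upwards [hyp] with ξ ⟨_, _, hqh, heq⟩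
      have : h ξ = 1 - q ξ := by linarith
      rw [this] at heq; nlinarith [heq]
    rw [hE, hW2, hA, hC, ← integral_add hiq2U2 hiw2, ← integral_sub hiq hiq2]
    exact h1
  -- Cauchy-Schwarz instances
  have cs1 : D ^ 2 ≤ C * E := by
    have := cs_integral μ q (fun ξ => q ξ * U ξ)
      hiq2
      (by apply hiq2U2.congr; filter_upwards with ξ; ring)
      (by apply hiq2U.congr; filter_upwards with ξ; ring)
    have e1 : ∫ x, q x * (q x * U x) ∂μ = D := by
      rw [hD]; apply integral_congr_ae; filter_upwards with ξ; ring
    have e2 : ∫ x, (q x * U x) ^ 2 ∂μ = E := by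
      rw [hE]; apply integral_congr_ae; filter_upwards with ξ; ring
    rw [e1, e2] at this; exact this
  have cs2 : A ^ 2 ≤ L * C := by
    have := cs_integral μ (fun _ => (1:ℝ)) q
      (by simpa using (integrable_const (1:ℝ))) hiq2 (by simpa using hiq)
    simp only [one_mul, one_pow] at this
    rw [integral_const, smul_eq_mul, mul_one, measureReal_def, hμuniv] at this
    exact this
  have cs3 : W ^ 2 ≤ L * W2 := by
    have := cs_integral μ (fun _ => (1:ℝ)) w
      (by simpa using (integrable_const (1:ℝ))) hiw2 (by simpa using hiw)
    simp only [one_mul, one_pow] at this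
    rw [integral_const, smul_eq_mul, mul_one, measureReal_def, hμuniv] at this
    exact this
  have hE0 : 0 ≤ E := by
    rw [hE]; apply integral_nonneg_of_ae; filter_upwards [hb] with ξ hξ; positivity
  have hW20 : 0 ≤ W2 := by
    rw [hW2]; apply integral_nonneg_of_ae; filter_upwards with ξ; positivity
  clear_value A B C D E W W2 L
  clear hb hyp mkInt hiq hih hiq2 hiq2U hiq2U2 hiw hiw2 hμuniv hA hB hC hD hE hW hW2 hpos hμ hfin hq hw hh hU
  clear μ q w h U
  constructor
  · field_simp
    linarith [hAB]
  · -- key inequality D²A²/C² + W² ≤ A * B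
    have hDA : D ^ 2 * A ^ 2 ≤ (C * E) * (L * C) :=
      mul_le_mul cs1 cs2 (sq_nonneg A) (mul_nonneg hC0.le hE0)
    have key : (D / C) ^ 2 * A ^ 2 + W ^ 2 ≤ A * B := by
      have h1 : (D / C) ^ 2 * A ^ 2 ≤ L * E := by
        rw [div_pow, div_mul_eq_mul_div, div_le_iff₀ (pow_pos hC0 2)]
        have : (C * E) * (L * C) = L * E * C ^ 2 := by ring
        linarith
      have hBe : B = L - A := by linarith
      have e1 : A * B = L * A - A ^ 2 := by rw [hBe]; ring
      have e2 : L * E + L * W2 = L * A - L * C := by linear_combination L * hEW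
      linarith [h1, cs3, e1, e2, cs2]
    have hgoal : (D / C) ^ 2 * (1 / L * A) ^ 2 + (1 / L * W) ^ 2
        = ((D / C) ^ 2 * A ^ 2 + W ^ 2) / L ^ 2 := by
      rw [eq_div_iff (pow_ne_zero 2 hL.ne')]; field_simp
    have hgoal2 : (1 / L * A) * (1 / L * B) = (A * B) / L ^ 2 := by
      rw [one_div_mul_eq_div, one_div_mul_eq_div, div_mul_div_comm, ← pow_two]
    rw [hgoal, hgoal2]
    gcongr
end
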